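/- Let A be a Banach algebra, X a right Banach A-module, and suppose X is faithful (for every nonzero x ∈ X there is a ∈ A with x·a ≠ 0). Then X is injective as a right operator A-module if and only if there exists a morphism (bounded A-module map) Φ : CB(A, X) → X that is a left inverse to the canonical map Δ : X → CB(A, X), Δ(x)(a) = x·a, where CB(A, X) carries the A-module structure (Ψ·a)(b) = Ψ(ab). -/

import Mathlib

/- STATEMENT 9: Let `A` be a (completely contractive) Banach algebra and `X` a
faithful right Banach `A`-module. Then `X` is injective as a right `A`-module if
and only if there is a morphism `Φ : CB(A, X) → X` that is a left inverse to the
canonical map `Δ : X → CB(A, X)`, `Δ(x)(a) = x · a`, where `CB(A, X)` carries the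
module structure `(Ψ · a)(b) = Ψ(a b)`.

We work with the Banach-space version: bounded maps instead of completely bounded
ones, and Banach modules instead of operator modules. -/

universe u

/-- A right Banach `A`-module: a Banach space with a bounded bilinear right action
satisfying `(x · a) · b = x · (a b)`. -/
structure BanachRightModule (A : Type u) [NormedRing A] [NormedAlgebra ℂ A] where
  X : Type u
  [iG : NormedAddCommGroup X]
  [iM : NormedSpace ℂ X]
  act : X →L[ℂ] A →L[ℂ] X
  act_act : ∀ (x : X) (a b : A), act (act x a) b = act x (a * b)

attribute [instance] BanachRightModule.iG BanachRightModule.iM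

variable {A : Type u} [NormedRing A] [NormedAlgebra ℂ A]

/-- A morphism of right Banach `A`-modules: a bounded linear `A`-module map. -/
def BanachRightModule.IsMorphism (Y Z : BanachRightModule A) (f : Y.X →L[ℂ] Z.X) :
    Prop :=
  ∀ (y : Y.X) (a : A), f (Y.act y a) = Z.act (f y) a

/-- Injectivity of a right Banach `A`-module `M`: for all modules `Y, Z`, every
injective admissible morphism `Φ : Y → Z` (admissible: there is a contraction
`Ψ : Z → Y` with `Φ ∘ Ψ = id` on the image of `Φ`), and every morphism
`g : Y → M`, there is a morphism `h : Z → M` with `h ∘ Φ = g`. -/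
def BanachRightModule.Injective (M : BanachRightModule A) : Prop :=
  ∀ (Y Z : BanachRightModule A) (Φ : Y.X →L[ℂ] Z.X),
    BanachRightModule.IsMorphism Y Z Φ → Function.Injective Φ →
    (∃ Ψ : Z.X →L[ℂ] Y.X, ‖Ψ‖ ≤ 1 ∧ ∀ z ∈ Set.range Φ, Φ (Ψ z) = z) →
    ∀ g : Y.X →L[ℂ] M.X, BanachRightModule.IsMorphism Y M g →
      ∃ h : Z.X →L[ℂ] M.X, BanachRightModule.IsMorphism Z M h ∧ ∀ y, h (Φ y) = g y

/-- The right `A`-module action on `CB(A, X)`, `(Ψ · a)(b) = Ψ (a * b)`. -/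
noncomputable def cbAct (M : BanachRightModule A) :
    (A →L[ℂ] M.X) →L[ℂ] A →L[ℂ] (A →L[ℂ] M.X) :=
  ((ContinuousLinearMap.compL ℂ A (A →L[ℂ] A) (A →L[ℂ] M.X)).flip
    (ContinuousLinearMap.mul ℂ A)).comp (ContinuousLinearMap.compL ℂ A A M.X)

lemma cbAct_apply (M : BanachRightModule A) (Ψ : A →L[ℂ] M.X) (a b : A) :
    cbAct M Ψ a b = Ψ (a * b) := rfl

/-- The action of the auxiliary module `M.X × (A →L M.X)` (mimicking `CB(A¹, M)`):
`(x, Ψ) · a = (Ψ a, Ψ (a · ·))`. -/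
noncomputable def extAct (M : BanachRightModule A) :
    (M.X × (A →L[ℂ] M.X)) →L[ℂ] A →L[ℂ] (M.X × (A →L[ℂ] M.X)) :=
  ((((ContinuousLinearMap.prodₗᵢ (𝕜 := ℂ) (E := A) (F := M.X) (G := A →L[ℂ] M.X)
      ℂ).toLinearIsometry.toContinuousLinearMap).comp
      ((ContinuousLinearMap.id ℂ (A →L[ℂ] M.X)).prod (cbAct M))).comp
    (ContinuousLinearMap.snd ℂ M.X (A →L[ℂ] M.X)))

lemma extAct_apply (M : BanachRightModule A) (p : M.X × (A →L[ℂ] M.X)) (a : A) :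
    extAct M p a = (p.2 a, cbAct M p.2 a) := rfl

/-- The auxiliary module `M.X × (A →L M.X)` mimicking `CB(A¹, M)`. -/
noncomputable def extMod (M : BanachRightModule A) : BanachRightModule A where
  X := M.X × (A →L[ℂ] M.X)
  act := extAct M
  act_act := by
    intro p a b
    rw [extAct_apply, extAct_apply, extAct_apply]
    refine Prod.ext (by simp [cbAct_apply]) ?_
    ext c
    simp [cbAct_apply, mul_assoc]

theorem injective_iff_left_inverse_of_delta (M : BanachRightModule A)
    -- `M` is faithful
    (h_faithful : ∀ x : M.X, x ≠ 0 → ∃ a : A, M.act x a ≠ 0) :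
    M.Injective ↔
      ∃ Φ : (A →L[ℂ] M.X) →L[ℂ] M.X,
        (∀ (Ψ : A →L[ℂ] M.X) (a : A), Φ (cbAct M Ψ a) = M.act (Φ Ψ) a) ∧
        -- `Φ` is a left inverse to `Δ : x ↦ (a ↦ x · a)`
        (∀ x : M.X, Φ (M.act x) = x) := by
  have faithful' : ∀ x : M.X, (∀ a : A, M.act x a = 0) → x = 0 := by
    intro x hx
    by_contra hne
    obtain ⟨a, ha⟩ := h_faithful x hne
    exact ha (hx a)
  constructor
  · -- forward direction
    intro hinj
    -- embed `M` into `extMod M` via `x ↦ (x, Δ x)`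
    set ι : M.X →L[ℂ] (extMod M).X :=
      (ContinuousLinearMap.id ℂ M.X).prod M.act with hι
    have hιapp : ∀ x : M.X, ι x = (x, M.act x) := fun x => rfl
    have hmorι : M.IsMorphism (extMod M) ι := by
      intro x a
      show ((M.act x a : M.X), M.act (M.act x a)) = extAct M (x, M.act x) a
      rw [extAct_apply]
      refine Prod.ext rfl ?_
      ext b
      simp [cbAct_apply, M.act_act]
    have hinjι : Function.Injective ι := by
      intro x y hxy
      have := congrArg Prod.fst hxy
      exact this
    have hadm : ∃ Ψ : (extMod M).X →L[ℂ] M.X, ‖Ψ‖ ≤ 1 ∧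
        ∀ z ∈ Set.range ι, ι (Ψ z) = z := by
      refine ⟨ContinuousLinearMap.fst ℂ M.X (A →L[ℂ] M.X),
        ContinuousLinearMap.norm_fst_le ℂ M.X (A →L[ℂ] M.X), ?_⟩
      rintro z ⟨x, rfl⟩
      rfl
    obtain ⟨h, hmorh, hext⟩ := hinj M (extMod M) ι hmorι hinjι hadm
      (ContinuousLinearMap.id ℂ M.X) (fun y a => rfl)
    -- `h (x, 0) = 0` by faithfulness
    have hzero : ∀ x : M.X, h (x, 0) = 0 := by
      intro x
      refine faithful' _ (fun a => ?_)
      have := hmorh (x, 0) a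
      have h0 : (extMod M).act (x, (0 : A →L[ℂ] M.X)) a = 0 := by
        show extAct M (x, 0) a = 0
        rw [extAct_apply]
        simp
      rw [h0] at this
      rw [← this, map_zero]
    refine ⟨h.comp ((0 : (A →L[ℂ] M.X) →L[ℂ] M.X).prod
      (ContinuousLinearMap.id ℂ (A →L[ℂ] M.X))), ?_, ?_⟩
    · intro Ψ a
      have key := hmorh ((0 : M.X), Ψ) a
      have h1 : (extMod M).act ((0 : M.X), Ψ) a = (Ψ a, cbAct M Ψ a) :=
        extAct_apply M _ a
      rw [h1] at key
      -- key : h (Ψ a, cbAct M Ψ a) = M.act (h (0, Ψ)) a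
      have h2 : ((Ψ a, cbAct M Ψ a) : (extMod M).X)
          = ((Ψ a, 0) : M.X × (A →L[ℂ] M.X)) + (0, cbAct M Ψ a) := by
        simp
      erw [h2, map_add, hzero, zero_add] at key
      exact key
    · intro x
      have h3 : ((x, M.act x) : (extMod M).X)
          = ((x, 0) : M.X × (A →L[ℂ] M.X)) + (0, M.act x) := by simp
      have := hext x
      erw [hιapp, h3, map_add, hzero, zero_add] at this
      exact this
  · -- reverse direction
    rintro ⟨Φ, hΦmor, hΦΔ⟩ Y Z φ hmorφ hinjφ ⟨ψ, _, hψ⟩ g hmorg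
    have hψφ : ∀ y : Y.X, ψ (φ y) = y := by
      intro y
      exact hinjφ (hψ (φ y) ⟨y, rfl⟩)
    -- `h z = Φ (b ↦ g (ψ (Z.act z b)))`
    set K : (A →L[ℂ] Z.X) →L[ℂ] (A →L[ℂ] M.X) :=
      ContinuousLinearMap.compL ℂ A Z.X M.X (g.comp ψ) with hK
    refine ⟨Φ.comp (K.comp Z.act), ?_, ?_⟩
    · intro z a
      show Φ (K (Z.act (Z.act z a))) = M.act (Φ (K (Z.act z))) a
      have h1 : K (Z.act (Z.act z a)) = cbAct M (K (Z.act z)) a := by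
        ext b
        show g (ψ (Z.act (Z.act z a) b)) = cbAct M (K (Z.act z)) a b
        rw [cbAct_apply, Z.act_act]
        rfl
      rw [h1, hΦmor]
    · intro y
      show Φ (K (Z.act (φ y))) = g y
      have h1 : K (Z.act (φ y)) = M.act (g y) := by
        ext b
        show g (ψ (Z.act (φ y) b)) = M.act (g y) b
        rw [← hmorφ, hψφ, hmorg]
      rw [h1, hΦΔ]
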